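/- For every natural number q ≥ 1 and every odd integer k, the sum S(k) = ∑_{i=1}^{2q+1} 2i · C(4q+2, 2i) · k^(2i-1) is divisible by 4. -/

import Mathlib

open Finset

lemma odd_filter_sum_choose (n : ℕ) (hn : 1 ≤ n) :
    ∑ j ∈ (range (n+1)).filter (fun j => ¬ Even j), (n.choose j : ℤ) = 2 ^ (n - 1) := by
  have h1 : ∑ j ∈ range (n+1), (-1 : ℤ) ^ j * n.choose j = 0 :=
    Int.alternating_sum_range_choose_of_ne (by omega)
  have h2 : ∑ j ∈ range (n+1), (n.choose j : ℤ) = 2 ^ n := by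
    exact_mod_cast congrArg (Nat.cast : ℕ → ℤ) (Nat.sum_range_choose n)
  rw [← Finset.sum_filter_add_sum_filter_not (range (n+1)) (fun j => Even j)] at h1 h2
  have hE : ∑ j ∈ (range (n+1)).filter (fun j => Even j), (-1 : ℤ) ^ j * n.choose j
      = ∑ j ∈ (range (n+1)).filter (fun j => Even j), (n.choose j : ℤ) := by
    apply Finset.sum_congr rfl
    intro j hj
    simp only [mem_filter] at hj
    rw [hj.2.neg_one_pow, one_mul]
  have hO : ∑ j ∈ (range (n+1)).filter (fun j => ¬ Even j), (-1 : ℤ) ^ j * n.choose j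
      = -∑ j ∈ (range (n+1)).filter (fun j => ¬ Even j), (n.choose j : ℤ) := by
    rw [← Finset.sum_neg_distrib]
    apply Finset.sum_congr rfl
    intro j hj
    simp only [mem_filter] at hj
    rw [(Nat.not_even_iff_odd.mp hj.2).neg_one_pow]
    ring
  rw [hE, hO] at h1
  have h2n : (2:ℤ) ^ n = 2 * 2 ^ (n-1) := by
    rw [← pow_succ']
    congr 1
    omega
  linarith

lemma sum_choose_odd_indices (q : ℕ) (hq : 1 ≤ q) :
    ∑ i ∈ Finset.Icc 1 (2 * q + 1), ((4 * q + 1).choose (2 * i - 1) : ℤ) = 2 ^ (4 * q) := by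
  have := odd_filter_sum_choose (4 * q + 1) (by omega)
  rw [show 4 * q + 1 - 1 = 4 * q by omega] at this
  rw [← this]
  apply Finset.sum_nbij' (fun i => 2 * i - 1) (fun j => (j + 1) / 2)
  · intro i hi
    simp only [mem_Icc] at hi
    simp only [mem_filter, mem_range]
    constructor
    · omega
    · intro h
      obtain ⟨r, hr⟩ := h
      omega
  · intro j hj
    simp only [mem_filter, mem_range] at hj
    have : Odd j := Nat.not_even_iff_odd.mp hj.2
    obtain ⟨r, hr⟩ := this
    simp only [mem_Icc]
    omega
  · intro i hi
    simp only [mem_Icc] at hi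
    omega
  · intro j hj
    simp only [mem_filter, mem_range] at hj
    have : Odd j := Nat.not_even_iff_odd.mp hj.2
    obtain ⟨r, hr⟩ := this
    omega
  · intro i hi
    rfl

theorem four_dvd_sum (q : ℕ) (hq : 1 ≤ q) (k : ℤ) (hk : Odd k) :
    (4 : ℤ) ∣ ∑ i ∈ Finset.Icc 1 (2 * q + 1),
      2 * (i : ℤ) * (Nat.choose (4 * q + 2) (2 * i) : ℤ) * k ^ (2 * i - 1) := by
  have hterm : ∀ i ∈ Finset.Icc 1 (2 * q + 1),
      2 * (i : ℤ) * (Nat.choose (4 * q + 2) (2 * i) : ℤ) * k ^ (2 * i - 1)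
      = (4 * q + 2) * (((4 * q + 1).choose (2 * i - 1) : ℤ) * k ^ (2 * i - 1)) := by
    intro i hi
    simp only [mem_Icc] at hi
    have h := Nat.add_one_mul_choose_eq (4 * q + 1) (2 * i - 1)
    simp only [Nat.succ_eq_add_one, show 2 * i - 1 + 1 = 2 * i from by omega] at h
    rw [show 4 * q + 1 + 1 = 4 * q + 2 from by omega] at h
    have h' := congrArg (Nat.cast : ℕ → ℤ) h
    push_cast at h' ⊢
    linear_combination (-(k ^ (2 * i - 1))) * h'
  rw [Finset.sum_congr rfl hterm, ← Finset.mul_sum]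
  have h42 : (4 : ℤ) = 2 * 2 := by norm_num
  have hU : (2 : ℤ) ∣ ∑ i ∈ Finset.Icc 1 (2 * q + 1),
      ((4 * q + 1).choose (2 * i - 1) : ℤ) * k ^ (2 * i - 1) := by
    rw [show (2:ℤ) = ((2:ℕ):ℤ) by norm_cast, ← ZMod.intCast_zmod_eq_zero_iff_dvd]
    push_cast
    have hk2 : (k : ZMod 2) = 1 := by
      obtain ⟨m, hm⟩ := hk
      subst hm
      push_cast
      simp [show (2 : ZMod 2) = 0 by decide]
    simp only [hk2, one_pow, mul_one]
    have := sum_choose_odd_indices q hq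
    have := congrArg (fun x : ℤ => (x : ZMod 2)) this
    push_cast at this
    rw [this]
    rw [show ((2:ZMod 2)) = 0 by decide]
    simp
    omega
  obtain ⟨u, hu⟩ := hU
  rw [hu]
  exact ⟨(2 * q + 1) * u, by push_cast; ring⟩
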